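/- arXiv:2011.14002 — 2 statements merged into one kernel-verified Lean document; each statement's English description precedes it below -/
import Mathlib

section
/- Suppose the closed disk D(0, R) of radius R centered at the origin is contained in the prisoner set P(f_{c₁}) of the intact map f_{c₁}(z) = z² + c₁. Then the prisoner set of the mutated map f is contained in P(f_{c₁}), i.e., P(f) ⊆ P(f_{c₁}). -/
/-- The mutated map: `z ↦ z² + c₀` on `|z| ≤ r`, a radial interpolation on the
annulus `r < |z| < R`, and `z ↦ z² + c₁` on `|z| ≥ R`. -/
noncomputable def mutatedMap (r R : ℝ) (c₀ c₁ : ℂ) (z : ℂ) : ℂ :=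
  if ‖z‖ ≤ r then z ^ 2 + c₀
  else if ‖z‖ < R then
    z ^ 2 + c₀ * (((R - ‖z‖) / (R - r) : ℝ) : ℂ)
      + c₁ * (((‖z‖ - r) / (R - r) : ℝ) : ℂ)
  else z ^ 2 + c₁

/-- The prisoner set of a map `g : ℂ → ℂ`: points with bounded forward orbit. -/
def prisonerSet (g : ℂ → ℂ) : Set ℂ :=
  {z₀ | Bornology.IsBounded (Set.range fun n : ℕ => g^[n] z₀)}

lemma mutatedMap_eq_of_ge (r R : ℝ) (hrR : r < R) (c₀ c₁ : ℂ) {z : ℂ}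
    (hz : R ≤ ‖z‖) : mutatedMap r R c₀ c₁ z = z ^ 2 + c₁ := by
  unfold mutatedMap
  rw [if_neg (by linarith), if_neg (by linarith)]

lemma mem_prisoner_of_iterate (g : ℂ → ℂ) (n : ℕ) (z₀ : ℂ)
    (h : g^[n] z₀ ∈ prisonerSet g) : z₀ ∈ prisonerSet g := by
  have hsub : Set.range (fun m : ℕ => g^[m] z₀) ⊆
      ((fun k : ℕ => g^[k] z₀) '' Set.Iio n) ∪
        Set.range (fun m : ℕ => g^[m] (g^[n] z₀)) := by
    rintro _ ⟨m, rfl⟩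
    by_cases hm : m < n
    · exact Or.inl ⟨m, hm, rfl⟩
    · refine Or.inr ⟨m - n, ?_⟩
      show g^[m - n] (g^[n] z₀) = g^[m] z₀
      rw [← Function.iterate_add_apply]
      congr 1
      omega
  have hb : Bornology.IsBounded (Set.range fun m : ℕ => g^[m] (g^[n] z₀)) := h
  exact (((Set.finite_Iio n).image _).isBounded.union hb).subset hsub

theorem prisonerSet_subset_of_disk_subset (r R : ℝ) (hr : 0 ≤ r) (hrR : r < R)
    (c₀ c₁ : ℂ)
    (hD : Metric.closedBall (0 : ℂ) R ⊆ prisonerSet (fun z => z ^ 2 + c₁)) :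
    prisonerSet (mutatedMap r R c₀ c₁) ⊆ prisonerSet (fun z => z ^ 2 + c₁) := by
  intro z₀ hz₀
  set f := mutatedMap r R c₀ c₁ with hf
  set g := fun z : ℂ => z ^ 2 + c₁ with hg
  by_cases h : ∃ n, ‖f^[n] z₀‖ ≤ R
  · set n := Nat.find h with hn
    have hle : ‖f^[n] z₀‖ ≤ R := Nat.find_spec h
    have hagree : ∀ k, k ≤ n → f^[k] z₀ = g^[k] z₀ := by
      intro k hk
      induction k with
      | zero => rfl
      | succ k ih =>
        have hk' : k < n := Nat.lt_of_succ_le hk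
        have hgt : R < ‖f^[k] z₀‖ := by
          have := Nat.find_min h hk'
          push_neg at this
          exact this
        rw [Function.iterate_succ_apply', Function.iterate_succ_apply',
          ← ih (le_of_lt hk')]
        exact mutatedMap_eq_of_ge r R hrR c₀ c₁ hgt.le
    have hmem : g^[n] z₀ ∈ Metric.closedBall (0 : ℂ) R := by
      rw [Metric.mem_closedBall, Complex.dist_eq, sub_zero, ← hagree n le_rfl]
      exact hle
    exact mem_prisoner_of_iterate g n z₀ (hD hmem)
  · push_neg at h
    have hagree : ∀ k, f^[k] z₀ = g^[k] z₀ := by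
      intro k
      induction k with
      | zero => rfl
      | succ k ih =>
        rw [Function.iterate_succ_apply', Function.iterate_succ_apply', ← ih]
        exact mutatedMap_eq_of_ge r R hrR c₀ c₁ (h k).le
    have : (fun m : ℕ => g^[m] z₀) = fun m : ℕ => f^[m] z₀ :=
      funext fun m => (hagree m).symm
    unfold prisonerSet
    rw [Set.mem_setOf_eq, this]
    exact hz₀
end

section
/- If the mutation radius r satisfies r ≥ M (so that the mutated map equals f_{c₀}(z) = z² + c₀ on the whole disk |z| ≤ M), then the prisoner set of the mutated map f coincides with the prisoner set of the pure mutation map: P(f) = P(f_{c₀}). -/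
lemma sq_sub_le_abs (z c : ℂ) (K : ℝ) (hc : ‖c‖ ≤ K) :
    (‖z‖) ^ 2 - K ≤ ‖z ^ 2 + c‖ := by
  have h1 : ‖z ^ 2‖ = (‖z‖) ^ 2 := by simp [map_pow]
  have h2 := norm_add_le (z ^ 2 + c) (-c)
  simp only [add_neg_cancel_right, norm_neg] at h2
  linarith

lemma mutated_lower (r R : ℝ) (hrR : r < R) (c₀ c₁ : ℂ) (z : ℂ) :
    (‖z‖) ^ 2 - (‖c₀‖ + ‖c₁‖)
      ≤ ‖mutatedMap r R c₀ c₁ z‖ := by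
  have hK0 : (0:ℝ) ≤ ‖c₀‖ + ‖c₁‖ := by positivity
  unfold mutatedMap
  split_ifs with h1 h2
  · exact sq_sub_le_abs z c₀ _ (by linarith [norm_nonneg c₁])
  · push_neg at h1
    have hRr : (0:ℝ) < R - r := by linarith
    set x : ℝ := (R - ‖z‖) / (R - r) with hx
    set y : ℝ := (‖z‖ - r) / (R - r) with hy
    have hx0 : 0 ≤ x := div_nonneg (by linarith) hRr.le
    have hx1 : x ≤ 1 := by rw [hx, div_le_one hRr]; linarith
    have hy0 : 0 ≤ y := div_nonneg (by linarith) hRr.le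
    have hy1 : y ≤ 1 := by rw [hy, div_le_one hRr]; linarith
    have heq : z ^ 2 + c₀ * (x : ℂ) + c₁ * (y : ℂ) = z ^ 2 + (c₀ * (x : ℂ) + c₁ * (y : ℂ)) := by
      ring
    rw [heq]
    apply sq_sub_le_abs
    calc ‖c₀ * (x : ℂ) + c₁ * (y : ℂ)‖
        ≤ ‖c₀ * (x : ℂ)‖ + ‖c₁ * (y : ℂ)‖ := norm_add_le _ _
      _ = ‖c₀‖ * x + ‖c₁‖ * y := by
          simp [norm_mul, Complex.norm_real, Real.norm_eq_abs, abs_of_nonneg hx0, abs_of_nonneg hy0]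
      _ ≤ ‖c₀‖ * 1 + ‖c₁‖ * 1 :=
          add_le_add (mul_le_mul_of_nonneg_left hx1 (norm_nonneg c₀))
            (mul_le_mul_of_nonneg_left hy1 (norm_nonneg c₁))
      _ = ‖c₀‖ + ‖c₁‖ := by ring
  · exact sq_sub_le_abs z c₁ _ (by linarith [norm_nonneg c₀])

lemma escape_growth (K M : ℝ) (hstep : ∀ t : ℝ, M ≤ t → t + 2 ≤ t ^ 2 - K)
    (g : ℂ → ℂ) (hg : ∀ z, (‖z‖) ^ 2 - K ≤ ‖g z‖)
    (w : ℂ) (hw : M ≤ ‖w‖) :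
    ∀ n : ℕ, ‖w‖ + 2 * n ≤ ‖g^[n] w‖ ∧ M ≤ ‖g^[n] w‖ := by
  intro n
  induction n with
  | zero => simp [hw]
  | succ n ih =>
    obtain ⟨h1, h2⟩ := ih
    rw [Function.iterate_succ_apply']
    set u := g^[n] w
    have h3 := hg u
    have h4 := hstep (‖u‖) h2
    constructor
    · push_cast
      linarith
    · linarith

lemma not_bounded_of_escape (K M : ℝ) (hM0 : 0 ≤ M)
    (hstep : ∀ t : ℝ, M ≤ t → t + 2 ≤ t ^ 2 - K)
    (g : ℂ → ℂ) (hg : ∀ z, (‖z‖) ^ 2 - K ≤ ‖g z‖)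
    (z₀ : ℂ) (n : ℕ) (h : M ≤ ‖g^[n] z₀‖) :
    ¬ Bornology.IsBounded (Set.range fun n : ℕ => g^[n] z₀) := by
  intro hb
  rw [isBounded_iff_forall_norm_le] at hb
  obtain ⟨C, hC⟩ := hb
  obtain ⟨m, hm⟩ := exists_nat_gt C
  have h1 := (escape_growth K M hstep g hg _ h m).1
  have h2 : g^[m] (g^[n] z₀) = g^[m + n] z₀ := (Function.iterate_add_apply g m n z₀).symm
  have h3 := hC (g^[m + n] z₀) ⟨m + n, rfl⟩
  rw [h2] at h1
  have habs : 0 ≤ ‖g^[n] z₀‖ := norm_nonneg _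
  have hm0 : (0:ℝ) ≤ (m : ℝ) := Nat.cast_nonneg m
  have : (m : ℝ) ≤ 2 * m := by linarith
  linarith

lemma orbit_agree (r R : ℝ) (c₀ c₁ : ℂ) (z₀ : ℂ) :
    ∀ n : ℕ, (∀ k < n, ‖(fun z => z ^ 2 + c₀)^[k] z₀‖ ≤ r) →
      (mutatedMap r R c₀ c₁)^[n] z₀ = (fun z => z ^ 2 + c₀)^[n] z₀ := by
  intro n
  induction n with
  | zero => intro _; rfl
  | succ n ih =>
    intro h
    rw [Function.iterate_succ_apply', Function.iterate_succ_apply',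
      ih (fun k hk => h k (hk.trans (Nat.lt_succ_self n)))]
    have hr : ‖(fun z => z ^ 2 + c₀)^[n] z₀‖ ≤ r := h n (Nat.lt_succ_self n)
    unfold mutatedMap
    rw [if_pos hr]

theorem prisonerSet_eq_of_large_mutation_radius (r R : ℝ) (hr : 0 ≤ r) (hrR : r < R)
    (c₀ c₁ : ℂ)
    (M : ℝ) (hM : M = 1 + Real.sqrt (1 + (‖c₀‖ + ‖c₁‖)))
    (hrM : M ≤ r) :
    prisonerSet (mutatedMap r R c₀ c₁) = prisonerSet (fun z => z ^ 2 + c₀) := by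
  classical
  set K : ℝ := ‖c₀‖ + ‖c₁‖ with hK
  have hK0 : 0 ≤ K := by positivity
  have hs2 : (Real.sqrt (1 + K)) ^ 2 = 1 + K := Real.sq_sqrt (by linarith)
  have hs1 : 1 ≤ Real.sqrt (1 + K) := by
    nlinarith [Real.sqrt_nonneg (1 + K)]
  have hM0 : 0 ≤ M := by rw [hM]; linarith
  have hstep : ∀ t : ℝ, M ≤ t → t + 2 ≤ t ^ 2 - K := by
    intro t ht
    rw [hM] at ht
    nlinarith [hs1, hs2, ht]
  have hg_mut : ∀ z, (‖z‖) ^ 2 - K ≤ ‖mutatedMap r R c₀ c₁ z‖ :=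
    fun z => mutated_lower r R hrR c₀ c₁ z
  have hg_pure : ∀ z, (‖z‖) ^ 2 - K ≤ ‖z ^ 2 + c₀‖ :=
    fun z => sq_sub_le_abs z c₀ K (by rw [hK]; linarith [norm_nonneg c₁])
  ext z₀
  simp only [prisonerSet, Set.mem_setOf_eq]
  by_cases hcase : ∀ n : ℕ, ‖(fun z => z ^ 2 + c₀)^[n] z₀‖ ≤ M
  · have heq : ∀ n : ℕ, (mutatedMap r R c₀ c₁)^[n] z₀ = (fun z => z ^ 2 + c₀)^[n] z₀ :=
      fun n => orbit_agree r R c₀ c₁ z₀ n (fun k _ => (hcase k).trans hrM)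
    rw [show (fun n : ℕ => (mutatedMap r R c₀ c₁)^[n] z₀)
        = (fun n : ℕ => (fun z => z ^ 2 + c₀)^[n] z₀) from funext heq]
  · push_neg at hcase
    have n₀ := Nat.find hcase
    have hn₀ : M < ‖(fun z => z ^ 2 + c₀)^[Nat.find hcase] z₀‖ :=
      Nat.find_spec hcase
    have hmin : ∀ k < Nat.find hcase, ‖(fun z => z ^ 2 + c₀)^[k] z₀‖ ≤ M :=
      fun k hk => not_lt.1 (Nat.find_min hcase hk)
    have heq : (mutatedMap r R c₀ c₁)^[Nat.find hcase] z₀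
        = (fun z => z ^ 2 + c₀)^[Nat.find hcase] z₀ :=
      orbit_agree r R c₀ c₁ z₀ _ (fun k hk => (hmin k hk).trans hrM)
    have h1 : ¬ Bornology.IsBounded (Set.range fun n : ℕ => (mutatedMap r R c₀ c₁)^[n] z₀) :=
      not_bounded_of_escape K M hM0 hstep _ hg_mut z₀ (Nat.find hcase)
        (by rw [heq]; exact hn₀.le)
    have h2 : ¬ Bornology.IsBounded (Set.range fun n : ℕ => (fun z => z ^ 2 + c₀)^[n] z₀) :=
      not_bounded_of_escape K M hM0 hstep _ hg_pure z₀ (Nat.find hcase) hn₀.le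
    exact iff_of_false h1 h2
end
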